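/- Define the reactive probability flux J̃(x→y) = θ̃(x) p̃(y|x) for x ∈ V⁺ and y ∈ V⁺ ∪ B. If q satisfies the committor system and θ̃ satisfies the reactive balance equation with initial distribution μ_r, then: (i) Σ_{y∈V⁺∪B} J̃(x→y) = θ̃(x) for every x ∈ V⁺; (ii) Σ_{x∈V⁺} J̃(x→y) = θ̃(y) for every y ∈ (V⁺∪B) ∩ Aᶜ; and (iii) Σ_{x∈A} Σ_{y∈V⁺∪B} J̃(x→y) = Σ_{x∈V⁺} Σ_{y∈B} J̃(x→y) = 1. -/

import Mathlib

open Classical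

-- `V⁺ = {x ∈ Bᶜ : Σ_{z∈V} p(z|x) q(z) > 0}`; here `p x z` is the probability `p(z|x)` of
-- jumping from `x` to `z`.
noncomputable def Vplus {V : Type*} [Fintype V]
    (p : V → V → ℝ) (q : V → ℝ) (B : Finset V) : Finset V :=
  Finset.univ.filter fun x => x ∉ B ∧ 0 < ∑ z, p x z * q z

-- `ptilde p q A B y x` is the transition probability `p̃(x|y)` of the reactive chain on
-- `V⁺ ∪ B`.
noncomputable def ptilde {V : Type*} [Fintype V] [DecidableEq V]
    (p : V → V → ℝ) (q : V → ℝ) (A B : Finset V) (y x : V) : ℝ :=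
  if y ∈ B then (if x = y then 1 else 0)
  else if y ∈ A then p y x * q x / ∑ z, p y z * q z
  else p y x * q x / q y

-- The reactive probability flux `J̃(x→y) = θ̃(x) p̃(y|x)` for `x ∈ V⁺`, `y ∈ V⁺ ∪ B`.
noncomputable def Jtilde {V : Type*} [Fintype V] [DecidableEq V]
    (p : V → V → ℝ) (q : V → ℝ) (A B : Finset V) (θt : V → ℝ) (x y : V) : ℝ :=
  θt x * ptilde p q A B x y

/-- Define the reactive probability flux `J̃(x→y) = θ̃(x) p̃(y|x)` for
`x ∈ V⁺` and `y ∈ V⁺ ∪ B`.  If `q` satisfies the committor system and `θ̃` satisfies the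
reactive balance equation with initial distribution `μ_r` (so in particular `A ⊆ V⁺`), then:
(i) `Σ_{y∈V⁺∪B} J̃(x→y) = θ̃(x)` for every `x ∈ V⁺`;
(ii) `Σ_{x∈V⁺} J̃(x→y) = θ̃(y)` for every `y ∈ (V⁺∪B) ∩ Aᶜ`;
(iii) `Σ_{x∈A} Σ_{y∈V⁺∪B} J̃(x→y) = Σ_{x∈V⁺} Σ_{y∈B} J̃(x→y) = 1`. -/
theorem Jtilde_flux_identities {V : Type*} [Fintype V] [DecidableEq V]
    (p : V → V → ℝ) (q : V → ℝ) (A B : Finset V)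
    (hAB : Disjoint A B) (hA : A.Nonempty) (hB : B.Nonempty)
    (hp0 : ∀ x y, 0 ≤ p x y) (hp1 : ∀ x, ∑ y, p x y = 1)
    (hq0 : ∀ x, 0 ≤ q x) (hq1 : ∀ x, q x ≤ 1)
    (hqA : ∀ x ∈ A, q x = 0) (hqB : ∀ x ∈ B, q x = 1)
    (hqE : ∀ x, x ∉ A ∪ B → q x = ∑ y, p x y * q y)
    (hAV : ∀ x ∈ A, x ∈ Vplus p q B)
    (μr : V → ℝ) (hμr0 : ∀ x ∈ A, 0 ≤ μr x) (hμr1 : ∑ x ∈ A, μr x = 1)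
    (θt : V → ℝ)
    (hθA : ∀ x ∈ A, θt x = μr x)
    (hbal : ∀ x ∈ Vplus p q B ∪ B, x ∉ A →
      θt x = ∑ y ∈ Vplus p q B, θt y * ptilde p q A B y x) :
    (∀ x ∈ Vplus p q B, ∑ y ∈ Vplus p q B ∪ B, Jtilde p q A B θt x y = θt x) ∧
    (∀ y ∈ Vplus p q B ∪ B, y ∉ A →
      ∑ x ∈ Vplus p q B, Jtilde p q A B θt x y = θt y) ∧
    (∑ x ∈ A, ∑ y ∈ Vplus p q B ∪ B, Jtilde p q A B θt x y = 1 ∧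
      ∑ x ∈ Vplus p q B, ∑ y ∈ B, Jtilde p q A B θt x y = 1) := by
  classical
  set Vp := Vplus p q B with hVpdef
  have hVpMem : ∀ x, x ∈ Vp ↔ x ∉ B ∧ 0 < ∑ z, p x z * q z := by
    intro x; simp [hVpdef, Vplus]
  have hVpB : ∀ x ∈ Vp, x ∉ B := fun x hx => ((hVpMem x).mp hx).1
  have hVpPos : ∀ x ∈ Vp, 0 < ∑ z, p x z * q z := fun x hx => ((hVpMem x).mp hx).2
  have hq0' : ∀ y, y ∉ Vp ∪ B → q y = 0 := by
    intro y hy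
    rcases Finset.notMem_union.mp hy with ⟨hy1, hy2⟩
    have hsle : ∑ z, p y z * q z ≤ 0 := by
      by_contra h
      push_neg at h
      exact hy1 ((hVpMem y).mpr ⟨hy2, h⟩)
    by_cases hyA : y ∈ A
    · exact hqA y hyA
    · have h1 := hqE y (by simp [Finset.mem_union, hyA, hy2])
      have hge : (0:ℝ) ≤ ∑ z, p y z * q z :=
        Finset.sum_nonneg fun z _ => mul_nonneg (hp0 _ _) (hq0 _)
      linarith
  have hrow : ∀ x ∈ Vp, ∑ y ∈ Vp ∪ B, ptilde p q A B x y = 1 := by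
    intro x hx
    have hxB := hVpB x hx
    have hpos := hVpPos x hx
    have hext : ∑ y ∈ Vp ∪ B, ptilde p q A B x y = ∑ y, ptilde p q A B x y := by
      refine Finset.sum_subset (Finset.subset_univ _) ?_
      intro y _ hy
      have hq := hq0' y hy
      simp [ptilde, hxB, hq]
    rw [hext]
    by_cases hxA : x ∈ A
    · have h2 : ∑ y, ptilde p q A B x y = (∑ y, p x y * q y) / (∑ z, p x z * q z) := by
        simp only [ptilde, if_neg hxB, if_pos hxA]
        rw [← Finset.sum_div]
      rw [h2, div_self (ne_of_gt hpos)]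
    · have hqx : q x = ∑ z, p x z * q z := hqE x (by simp [Finset.mem_union, hxA, hxB])
      have hqxpos : 0 < q x := hqx ▸ hpos
      have h2 : ∑ y, ptilde p q A B x y = (∑ y, p x y * q y) / q x := by
        simp only [ptilde, if_neg hxB, if_neg hxA]
        rw [← Finset.sum_div]
      rw [h2, ← hqx, div_self (ne_of_gt hqxpos)]
  have part1 : ∀ x ∈ Vp, ∑ y ∈ Vp ∪ B, Jtilde p q A B θt x y = θt x := by
    intro x hx
    simp only [Jtilde, ← Finset.mul_sum, hrow x hx, mul_one]
  have part2 : ∀ y ∈ Vp ∪ B, y ∉ A → ∑ x ∈ Vp, Jtilde p q A B θt x y = θt y := by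
    intro y hy hyA
    exact (hbal y hy hyA).symm
  have hASub : A ⊆ Vp := fun x hx => hAV x hx
  have hA1 : ∑ y ∈ A, θt y = 1 := by
    rw [Finset.sum_congr rfl hθA, hμr1]
  have part3a : ∑ x ∈ A, ∑ y ∈ Vp ∪ B, Jtilde p q A B θt x y = 1 := by
    rw [Finset.sum_congr rfl fun x hx => part1 x (hASub hx)]
    exact hA1
  have hdisj : Disjoint Vp B := by
    rw [Finset.disjoint_left]; intro x hx; exact hVpB x hx
  have hcolA : ∀ y ∈ A, ∑ x ∈ Vp, Jtilde p q A B θt x y = 0 := by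
    intro y hyA
    refine Finset.sum_eq_zero fun x hx => ?_
    have hxB := hVpB x hx
    have hqy : q y = 0 := hqA y hyA
    by_cases hxA : x ∈ A <;> simp [Jtilde, ptilde, hxB, hxA, hqy]
  have hS : ∑ x ∈ Vp, ∑ y ∈ Vp ∪ B, Jtilde p q A B θt x y = ∑ x ∈ Vp, θt x :=
    Finset.sum_congr rfl fun x hx => part1 x hx
  have hsplit : ∑ x ∈ Vp, ∑ y ∈ Vp ∪ B, Jtilde p q A B θt x y
      = ∑ x ∈ Vp, ∑ y ∈ Vp, Jtilde p q A B θt x y + ∑ x ∈ Vp, ∑ y ∈ B, Jtilde p q A B θt x y := by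
    rw [← Finset.sum_add_distrib]
    exact Finset.sum_congr rfl fun x _ => Finset.sum_union hdisj
  have hVpCol : ∑ x ∈ Vp, ∑ y ∈ Vp, Jtilde p q A B θt x y = ∑ x ∈ Vp, θt x - 1 := by
    rw [Finset.sum_comm]
    have h3 : ∑ y ∈ Vp, ∑ x ∈ Vp, Jtilde p q A B θt x y
        = ∑ y ∈ Vp, (if y ∈ A then 0 else θt y) := by
      refine Finset.sum_congr rfl fun y hy => ?_
      by_cases hyA : y ∈ A
      · simp [hyA, hcolA y hyA]
      · simp [hyA, part2 y (Finset.mem_union_left _ hy) hyA]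
    rw [h3]
    have h4 : ∑ y ∈ Vp, (if y ∈ A then θt y else 0) = 1 := by
      rw [← Finset.sum_subset hASub (fun y _ hy => by simp [hy])]
      rw [← hA1]
      exact Finset.sum_congr rfl fun y hy => by simp [hy]
    calc ∑ y ∈ Vp, (if y ∈ A then 0 else θt y)
        = ∑ y ∈ Vp, (θt y - if y ∈ A then θt y else 0) := by
          refine Finset.sum_congr rfl fun y _ => ?_
          by_cases h : y ∈ A <;> simp [h]
      _ = ∑ y ∈ Vp, θt y - ∑ y ∈ Vp, (if y ∈ A then θt y else 0) := Finset.sum_sub_distrib _ _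
      _ = ∑ y ∈ Vp, θt y - 1 := by rw [h4]
  refine ⟨part1, part2, part3a, ?_⟩
  linarith
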